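/- For every nonzero integer n, the sum-q-norm satisfies ξ(n) = d(n) − ∑_{k ≥ 2, k | n} ζ(k), where d is the number-of-divisors function and ζ is the Riemann zeta function. In particular, for any prime p, ξ(p) + ζ(p) = 2. -/

import Mathlib

/-- The q-norm of an integer n: sum of 1/q^k over positive integers k not dividing n. -/
noncomputable def qnorm (q : ℝ) (n : ℤ) : ℝ :=
  ∑' k : ℕ, if 1 ≤ k ∧ ¬ ((k : ℤ) ∣ n) then 1 / q ^ k else 0

/-- The sum-q-norm: sum of the q-norms over integers q ≥ 2. -/
noncomputable def xiNorm (n : ℤ) : ℝ :=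
  ∑' q : ℕ, if 2 ≤ q then qnorm (q : ℝ) n else 0

/-- The real Riemann zeta values ζ(k) = ∑_{n ≥ 1} 1/n^k. -/
noncomputable def realZeta (k : ℕ) : ℝ := ∑' n : ℕ, 1 / ((n : ℝ) + 1) ^ k

open Finset

/-- geometric tail: ∑_{k≥2} 1/q^k = 1/(q(q-1)) -/
lemma geom_tail {q : ℝ} (hq : 2 ≤ q) :
    HasSum (fun k : ℕ => if 2 ≤ k then 1 / q ^ k else 0) (1 / (q * (q - 1))) := by
  have hq0 : 0 < q := by linarith
  have h1 : (1:ℝ)/q < 1 := by rw [div_lt_one hq0]; linarith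
  have h := (hasSum_geometric_of_lt_one (by positivity) h1).mul_right (1 / q ^ 2)
  have hne : (1 - 1/q) ≠ 0 := by
    rw [sub_ne_zero]; intro h'; rw [← h'] at h1; exact lt_irrefl _ h1
  have hq0' : q ≠ 0 := ne_of_gt hq0
  have hq1 : q - 1 ≠ 0 := by intro h'; nlinarith
  have hval : (1 - 1/q)⁻¹ * (1 / q ^ 2) = 1 / (q * (q - 1)) := by
    have h2 : 1 - 1/q = (q-1)/q := by field_simp
    rw [h2, inv_div, div_mul_div_comm, mul_one,
      div_eq_div_iff (mul_ne_zero hq1 (pow_ne_zero _ hq0')) (mul_ne_zero hq0' hq1)]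
    ring
  rw [hval] at h
  have hfn : (fun k : ℕ => if 2 ≤ k + 2 then 1 / q ^ (k + 2) else 0)
      = fun k : ℕ => (1/q) ^ k * (1 / q ^ 2) := by
    funext k
    rw [if_pos (by omega)]
    rw [pow_add, one_div_pow, one_div_mul_one_div]
  rw [← hfn] at h
  have hzero : ∑ i ∈ range 2, (if 2 ≤ i then 1 / q ^ i else 0) = 0 := by
    norm_num [Finset.sum_range_succ]
  exact (hasSum_nat_add_iff' (f := fun k : ℕ => if 2 ≤ k then 1 / q ^ k else 0) 2).mp
    (by rw [hzero, sub_zero]; exact h)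

lemma zeta_summable {k : ℕ} (hk : 2 ≤ k) :
    Summable (fun n : ℕ => 1 / ((n : ℝ) + 1) ^ k) := by
  have : Summable (fun n : ℕ => 1 / ((n : ℝ)) ^ k) :=
    Real.summable_one_div_nat_pow.mpr (by omega)
  have := (summable_nat_add_iff 1).mpr this
  simpa using this

/-- ∑_{q≥2} 1/q^k = ζ(k) - 1 -/
lemma zeta_tail {k : ℕ} (hk : 2 ≤ k) :
    HasSum (fun q : ℕ => if 2 ≤ q then 1 / (q : ℝ) ^ k else 0) (realZeta k - 1) := by
  have H : HasSum (fun n : ℕ => 1 / ((n : ℝ) + 1) ^ k) (realZeta k) :=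
    (zeta_summable hk).hasSum
  have H2 : HasSum (fun q : ℕ => if 2 ≤ q + 2 then 1 / ((q : ℝ) + 2) ^ k else 0)
      (realZeta k - 1) := by
    have := (hasSum_nat_add_iff' (f := fun n : ℕ => 1 / ((n : ℝ) + 1) ^ k) 1).mpr H
    simp only [Nat.cast_add, Nat.cast_one, range_one, sum_singleton, Nat.cast_zero] at this
    norm_num at this
    convert this using 2 with q
    · rfl
    rw [if_pos (by omega)]
    push_cast
    ring_nf
  have hzero : ∑ i ∈ range 2, (if 2 ≤ i then 1 / (i : ℝ) ^ k else 0) = 0 := by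
    norm_num [Finset.sum_range_succ]
  exact (hasSum_nat_add_iff' (f := fun q : ℕ => if 2 ≤ q then 1 / (q : ℝ) ^ k else 0) 2).mp
    (by rw [hzero, sub_zero]; convert H2 using 2 with q; rfl; push_cast; ring_nf)

/-- telescoping: ∑_{q≥2} 1/(q(q-1)) = 1 -/
lemma telescope : HasSum (fun q : ℕ => if 2 ≤ q then 1 / ((q : ℝ) * ((q : ℝ) - 1)) else 0) 1 := by
  have key : HasSum (fun n : ℕ => 1 / (((n : ℝ) + 2) * ((n : ℝ) + 1))) 1 := by
    rw [hasSum_iff_tendsto_nat_of_nonneg (fun i => by positivity)]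
    have heq : ∀ N : ℕ, ∑ n ∈ range N, 1 / (((n : ℝ) + 2) * ((n : ℝ) + 1))
        = 1 - 1 / ((N : ℝ) + 1) := by
      intro N
      have := Finset.sum_range_sub' (fun i : ℕ => 1 / ((i : ℝ) + 1)) N
      simp only [Nat.cast_zero, zero_add, div_one] at this
      rw [← this]
      apply Finset.sum_congr rfl
      intro i _
      have h1 : ((i : ℝ) + 1) ≠ 0 := by positivity
      have h2 : ((i : ℝ) + 1 + 1) ≠ 0 := by positivity
      push_cast
      field_simp
      ring
    simp only [heq]
    have : Filter.Tendsto (fun N : ℕ => 1 - 1 / ((N : ℝ) + 1)) Filter.atTop (nhds (1 - 0)) :=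
      tendsto_const_nhds.sub tendsto_one_div_add_atTop_nhds_zero_nat
    simpa using this
  have H2 : HasSum (fun n : ℕ => if 2 ≤ n + 2 then
      1 / (((n : ℝ) + 2) * (((n : ℝ) + 2) - 1)) else 0) 1 := by
    convert key using 2 with n
    rw [if_pos (by omega)]
    ring_nf
  have hzero : ∑ i ∈ range 2, (if 2 ≤ i then 1 / ((i : ℝ) * ((i : ℝ) - 1)) else 0) = 0 := by
    norm_num [Finset.sum_range_succ]
  exact (hasSum_nat_add_iff'
    (f := fun q : ℕ => if 2 ≤ q then 1 / ((q : ℝ) * ((q : ℝ) - 1)) else 0) 2).mp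
    (by rw [hzero, sub_zero]; convert H2 using 2 with q; rfl; push_cast; ring_nf)

lemma qnorm_hasSum {n : ℤ} (hn : n ≠ 0) {q : ℝ} (hq : 2 ≤ q) :
    qnorm q n = 1 / (q * (q - 1)) -
      ∑ k ∈ n.natAbs.divisors.filter (fun k => 2 ≤ k), 1 / q ^ k := by
  set D := n.natAbs.divisors.filter (fun k => 2 ≤ k) with hD
  have hg : HasSum (fun k : ℕ => if k ∈ D then 1 / q ^ k else 0) (∑ k ∈ D, 1 / q ^ k) := by
    have := hasSum_sum_of_ne_finset_zero
      (f := fun k : ℕ => if k ∈ D then 1 / q ^ k else 0) (s := D) (L := SummationFilter.unconditional ℕ)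
      (fun b hb => if_neg hb)
    convert this using 1
    exact (Finset.sum_congr rfl fun k hk => (if_pos hk).symm)
  have key := (geom_tail hq).sub hg
  have hfun : (fun k : ℕ => (if 2 ≤ k then 1 / q ^ k else 0) -
      (if k ∈ D then 1 / q ^ k else 0)) =
      (fun k : ℕ => if 1 ≤ k ∧ ¬ ((k : ℤ) ∣ n) then 1 / q ^ k else 0) := by
    funext k
    have hmem : k ∈ D ↔ (2 ≤ k ∧ (k : ℤ) ∣ n) := by
      rw [hD, Finset.mem_filter, Nat.mem_divisors, Int.natCast_dvd_natCast.symm,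
        Int.dvd_natAbs]
      constructor
      · rintro ⟨⟨h1, _⟩, h2⟩; exact ⟨h2, h1⟩
      · rintro ⟨h1, h2⟩; exact ⟨⟨h2, Int.natAbs_ne_zero.mpr hn⟩, h1⟩
    rcases Nat.lt_or_ge k 2 with hk | hk
    · interval_cases k
      · simp [hmem]
      · simp [hmem]
    · by_cases hd : (k : ℤ) ∣ n
      · rw [if_pos hk, if_pos (hmem.mpr ⟨hk, hd⟩), if_neg (by tauto), sub_self]
      · rw [if_pos hk, if_neg (fun h => hd (hmem.mp h).2),
          if_pos ⟨by omega, hd⟩, sub_zero]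
  rw [hfun] at key
  exact key.tsum_eq

theorem stmt_17 :
    (∀ n : ℤ, n ≠ 0 →
      xiNorm n = (n.natAbs.divisors.card : ℝ) -
        ∑ k ∈ n.natAbs.divisors.filter (fun k => 2 ≤ k), realZeta k) ∧
    (∀ p : ℕ, p.Prime → xiNorm (p : ℤ) + realZeta p = 2) := by
  have main : ∀ n : ℤ, n ≠ 0 →
      xiNorm n = (n.natAbs.divisors.card : ℝ) -
        ∑ k ∈ n.natAbs.divisors.filter (fun k => 2 ≤ k), realZeta k := by
    intro n hn
    set D := n.natAbs.divisors.filter (fun k => 2 ≤ k) with hD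
    have hZ : HasSum (fun q : ℕ => ∑ k ∈ D, if 2 ≤ q then 1 / (q : ℝ) ^ k else 0)
        (∑ k ∈ D, (realZeta k - 1)) :=
      hasSum_sum (fun k hk => zeta_tail (Finset.mem_filter.mp hk).2)
    have key := telescope.sub hZ
    have hfun : (fun q : ℕ => (if 2 ≤ q then 1 / ((q : ℝ) * ((q : ℝ) - 1)) else 0) -
        ∑ k ∈ D, if 2 ≤ q then 1 / (q : ℝ) ^ k else 0) =
        (fun q : ℕ => if 2 ≤ q then qnorm (q : ℝ) n else 0) := by
      funext q
      by_cases hq : 2 ≤ q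
      · rw [if_pos hq, if_pos hq, qnorm_hasSum hn (by exact_mod_cast hq)]
        congr 1
        exact Finset.sum_congr rfl fun k _ => (if_pos hq)
      · simp [hq]
    rw [hfun] at key
    rw [xiNorm, key.tsum_eq]
    have hcard : D.card = n.natAbs.divisors.card - 1 := by
      have h1 : (1 : ℕ) ∈ n.natAbs.divisors :=
        Nat.one_mem_divisors.mpr (Int.natAbs_ne_zero.mpr hn)
      have : n.natAbs.divisors.filter (fun k => ¬ 2 ≤ k) = {1} := by
        ext k
        simp only [Finset.mem_filter, Finset.mem_singleton, Nat.mem_divisors]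
        constructor
        · rintro ⟨⟨hd, hne⟩, hk⟩
          have := Nat.pos_of_dvd_of_pos hd (Nat.pos_of_ne_zero hne)
          omega
        · rintro rfl; exact ⟨⟨one_dvd _, Int.natAbs_ne_zero.mpr hn⟩, by omega⟩
      have hsplit := Finset.card_filter_add_card_filter_not
        (s := n.natAbs.divisors) (p := fun k => 2 ≤ k)
      rw [this, Finset.card_singleton] at hsplit
      rw [hD]
      omega
    have h1le : 1 ≤ n.natAbs.divisors.card := by
      have h1 : (1 : ℕ) ∈ n.natAbs.divisors :=
        Nat.one_mem_divisors.mpr (Int.natAbs_ne_zero.mpr hn)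
      exact Finset.card_pos.mpr ⟨1, h1⟩
    rw [Finset.sum_sub_distrib, Finset.sum_const, nsmul_eq_mul, mul_one, hcard]
    push_cast [Nat.cast_sub h1le]
    ring
  refine ⟨main, fun p hp => ?_⟩
  have := main (p : ℤ) (by exact_mod_cast hp.ne_zero)
  rw [Int.natAbs_natCast, hp.divisors] at this
  have hfil : ({1, p} : Finset ℕ).filter (fun k => 2 ≤ k) = {p} := by
    ext k
    simp only [Finset.mem_filter, Finset.mem_insert, Finset.mem_singleton]
    constructor
    · rintro ⟨rfl | rfl, hk⟩
      · omega
      · rfl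
    · rintro rfl; exact ⟨Or.inr rfl, hp.two_le⟩
  rw [hfil, Finset.sum_singleton, Finset.card_insert_of_notMem (by simp [hp.ne_one.symm]),
    Finset.card_singleton] at this
  rw [this]
  push_cast
  ring
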